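/- For any a ∈ ℝⁿ, X(a)Ŷ(a) − Y(a)X̂(a) = Σ_{k=1}^n Σ_{1≤i_1,...,i_k≤n} a_{i_1}²a_{i_2}²···a_{i_{k-1}}²a_{i_k}, where the inner sum runs over all k-tuples of distinct indices (equivalently, equals Σ_{p=0}^{n-1} S_{p+1}^p(a) with S_{p+1}^p(a) = Σ over sets of p+1 distinct indices, one distinguished, of the product of the squares of the p undistinguished entries times the distinguished entry). -/

import Mathlib

open Finset

/-- The `k`-th elementary symmetric polynomial of `a : Fin n → ℝ`. -/
noncomputable def esymm (n k : ℕ) (a : Fin n → ℝ) : ℝ :=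
  ∑ s ∈ Finset.powersetCard k (Finset.univ : Finset (Fin n)), ∏ i ∈ s, a i

/-- The `k`-th elementary symmetric polynomial of `a` with the `i`-th entry removed. -/
noncomputable def esymmDel (n k : ℕ) (a : Fin n → ℝ) (i : Fin n) : ℝ :=
  ∑ s ∈ Finset.powersetCard k ((Finset.univ : Finset (Fin n)).erase i), ∏ j ∈ s, a j


/-- X(λ) = Σ_{0≤2j≤n} (−1)^j σ_{2j}(λ). -/
noncomputable def Xpoly (n : ℕ) (a : Fin n → ℝ) : ℝ :=
  ∑ j ∈ Finset.range (n / 2 + 1), (-1 : ℝ) ^ j * esymm n (2 * j) a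

/-- Y(λ) = Σ_{0≤2j+1≤n} (−1)^j σ_{2j+1}(λ). -/
noncomputable def Ypoly (n : ℕ) (a : Fin n → ℝ) : ℝ :=
  ∑ j ∈ Finset.range ((n + 1) / 2), (-1 : ℝ) ^ j * esymm n (2 * j + 1) a

/-- X̂(λ) = Σ_{0≤2j≤n} (−1)^j (2j) σ_{2j}(λ). -/
noncomputable def Xhat (n : ℕ) (a : Fin n → ℝ) : ℝ :=
  ∑ j ∈ Finset.range (n / 2 + 1), (-1 : ℝ) ^ j * (2 * j : ℝ) * esymm n (2 * j) a

/-- Ŷ(λ) = Σ_{0≤2j+1≤n} (−1)^j (2j+1) σ_{2j+1}(λ). -/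
noncomputable def Yhat (n : ℕ) (a : Fin n → ℝ) : ℝ :=
  ∑ j ∈ Finset.range ((n + 1) / 2), (-1 : ℝ) ^ j * (2 * j + 1 : ℝ) * esymm n (2 * j + 1) a

/-- The Lagrangian phase H(λ) = Σ arctan λ_i. -/
noncomputable def phaseH (n : ℕ) (a : Fin n → ℝ) : ℝ :=
  ∑ i, Real.arctan (a i)

/-- S_{p+1}^p(a): sum over sets of p+1 distinct indices with one distinguished index i,
of the product of the squares of the other p entries times a_i. -/
noncomputable def Srow (n : ℕ) (a : Fin n → ℝ) (p : ℕ) : ℝ :=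
  ∑ s ∈ Finset.powersetCard (p + 1) (Finset.univ : Finset (Fin n)),
    ∑ i ∈ s, (∏ j ∈ s.erase i, (a j) ^ 2) * a i

/-- X(a)Ŷ(a) − Y(a)X̂(a) = Σ_{p=0}^{n-1} S_{p+1}^p(a). -/
lemma evenOdd (f : ℕ → ℂ) (m : ℕ) :
    ∑ k ∈ Finset.range m, f k =
      (∑ j ∈ Finset.range ((m+1)/2), f (2*j)) + ∑ j ∈ Finset.range (m/2), f (2*j+1) := by
  induction m with
  | zero => simp
  | succ m ih =>
    rw [Finset.sum_range_succ, ih]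
    rcases Nat.even_or_odd m with ⟨t, ht⟩ | ⟨t, ht⟩
    · have h1 : (m+1+1)/2 = t+1 := by omega
      have h2 : (m+1)/2 = t := by omega
      have h3 : m/2 = t := by omega
      have h4 : 2*t = m := by omega
      rw [h1, h2, h3, Finset.sum_range_succ, h4]
      ring
    · have h1 : (m+1+1)/2 = t+1 := by omega
      have h2 : (m+1)/2 = t+1 := by omega
      have h3 : m/2 = t := by omega
      have h4 : 2*t+1 = m := by omega
      rw [h2, h1, h3, Finset.sum_range_succ (f := fun j => f (2*j+1)), h4]
      ring

lemma swap_sum {R : Type*} [AddCommMonoid R] (n : ℕ) (g : Finset (Fin n) → Fin n → R) :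
    ∑ s ∈ (Finset.univ : Finset (Fin n)).powerset, ∑ i ∈ s, g s i
      = ∑ i : Fin n, ∑ t ∈ ((Finset.univ : Finset (Fin n)).erase i).powerset, g (insert i t) i := by
  have h1 : ∀ s ∈ (Finset.univ : Finset (Fin n)).powerset,
      ∑ i ∈ s, g s i = ∑ i : Fin n, if i ∈ s then g s i else 0 := by
    intro s _
    rw [Finset.sum_ite_mem]
    simp [Finset.inter_eq_right.2 (Finset.subset_univ s)]
  rw [Finset.sum_congr rfl h1, Finset.sum_comm]
  refine Finset.sum_congr rfl fun i _ => ?_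
  have hi : i ∉ (Finset.univ : Finset (Fin n)).erase i := Finset.notMem_erase _ _
  have : (Finset.univ : Finset (Fin n)) = insert i ((Finset.univ : Finset (Fin n)).erase i) := by
    rw [Finset.insert_erase (Finset.mem_univ i)]
  rw [this, Finset.sum_powerset_insert hi, Finset.erase_insert hi]
  have z1 : ∑ t ∈ ((Finset.univ : Finset (Fin n)).erase i).powerset,
      (if i ∈ t then g t i else 0) = 0 := by
    refine Finset.sum_eq_zero fun t ht => ?_
    have : i ∉ t := fun h => hi (Finset.mem_powerset.1 ht h)
    simp [this]
  rw [z1, zero_add]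
  refine Finset.sum_congr rfl fun t _ => ?_
  simp

lemma prod_one_add {R : Type*} [CommRing R] {ι : Type*} [DecidableEq ι] (s : Finset ι) (b : ι → R) :
    ∏ k ∈ s, (1 + b k) = ∑ t ∈ s.powerset, ∏ k ∈ t, b k := by
  have h : ∀ k ∈ s, (1 : R) + b k = b k + 1 := fun k _ => add_comm _ _
  rw [Finset.prod_congr rfl h, Finset.prod_add]
  simp

lemma P_eq (n : ℕ) (a : Fin n → ℝ) :
    ∏ k : Fin n, (1 + (a k : ℂ) * Complex.I)
      = (Xpoly n a : ℂ) + (Ypoly n a : ℂ) * Complex.I := by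
  rw [_root_.prod_one_add]
  have h1 : ∀ t ∈ (Finset.univ : Finset (Fin n)).powerset,
      ∏ k ∈ t, ((a k : ℂ) * Complex.I)
        = (∏ k ∈ t, (a k : ℂ)) * Complex.I ^ t.card := by
    intro t _
    rw [Finset.prod_mul_distrib, Finset.prod_const]
  rw [Finset.sum_congr rfl h1, Finset.sum_powerset]
  have hc : #(Finset.univ : Finset (Fin n)) = n := by simp
  rw [hc]
  have h2 : ∀ j ∈ Finset.range (n+1),
      ∑ t ∈ Finset.powersetCard j (Finset.univ : Finset (Fin n)),
        (∏ k ∈ t, (a k : ℂ)) * Complex.I ^ t.card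
        = Complex.I ^ j * (esymm n j a : ℂ) := by
    intro j _
    rw [esymm]
    push_cast
    rw [Finset.mul_sum]
    refine Finset.sum_congr rfl fun t ht => ?_
    rw [(Finset.mem_powersetCard.1 ht).2]
    ring
  rw [Finset.sum_congr rfl h2, evenOdd (fun k => Complex.I ^ k * (esymm n k a : ℂ)) (n+1)]
  have e1 : (n+1+1)/2 = n/2+1 := by omega
  rw [e1]
  simp only [Xpoly, Ypoly]
  push_cast
  rw [Finset.sum_mul]
  congr 1
  · refine Finset.sum_congr rfl fun j _ => ?_
    rw [pow_mul, Complex.I_sq]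
  · refine Finset.sum_congr rfl fun j _ => ?_
    rw [pow_succ, pow_mul, Complex.I_sq]
    ring

lemma D_eq (n : ℕ) (a : Fin n → ℝ) :
    Complex.I * ∑ i : Fin n, (a i : ℂ) *
        ∏ k ∈ (Finset.univ : Finset (Fin n)).erase i, (1 + (a k : ℂ) * Complex.I)
      = (Xhat n a : ℂ) + (Yhat n a : ℂ) * Complex.I := by
  set g : Finset (Fin n) → Fin n → ℂ :=
    fun s _ => (∏ k ∈ s, (a k : ℂ)) * Complex.I ^ s.card with hg
  have hL : ∀ i ∈ (Finset.univ : Finset (Fin n)),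
      Complex.I * ((a i : ℂ) *
        ∏ k ∈ (Finset.univ : Finset (Fin n)).erase i, (1 + (a k : ℂ) * Complex.I))
      = ∑ t ∈ ((Finset.univ : Finset (Fin n)).erase i).powerset, g (insert i t) i := by
    intro i _
    rw [_root_.prod_one_add, Finset.mul_sum, Finset.mul_sum]
    refine Finset.sum_congr rfl fun t ht => ?_
    have hit : i ∉ t := fun h => Finset.notMem_erase i _ (Finset.mem_powerset.1 ht h)
    rw [hg]
    simp only
    rw [Finset.prod_insert hit, Finset.card_insert_of_notMem hit,
      Finset.prod_mul_distrib, Finset.prod_const]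
    ring
  rw [Finset.mul_sum, Finset.sum_congr rfl hL, ← swap_sum n g]
  have h3 : ∀ s ∈ (Finset.univ : Finset (Fin n)).powerset,
      ∑ i ∈ s, g s i = (s.card : ℂ) * ((∏ k ∈ s, (a k : ℂ)) * Complex.I ^ s.card) := by
    intro s _
    rw [Finset.sum_const, nsmul_eq_mul]
  rw [Finset.sum_congr rfl h3, Finset.sum_powerset]
  have hc : #(Finset.univ : Finset (Fin n)) = n := by simp
  rw [hc]
  have h2 : ∀ j ∈ Finset.range (n+1),
      ∑ t ∈ Finset.powersetCard j (Finset.univ : Finset (Fin n)),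
        (t.card : ℂ) * ((∏ k ∈ t, (a k : ℂ)) * Complex.I ^ t.card)
        = (j : ℂ) * Complex.I ^ j * (esymm n j a : ℂ) := by
    intro j _
    have hterm : ∀ t ∈ Finset.powersetCard j (Finset.univ : Finset (Fin n)),
        (t.card : ℂ) * ((∏ k ∈ t, (a k : ℂ)) * Complex.I ^ t.card)
          = ((j : ℂ) * Complex.I ^ j) * ∏ k ∈ t, (a k : ℂ) := by
      intro t ht
      rw [(Finset.mem_powersetCard.1 ht).2]
      ring
    rw [Finset.sum_congr rfl hterm, ← Finset.mul_sum, esymm]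
    push_cast
    ring
  rw [Finset.sum_congr rfl h2,
    evenOdd (fun k => (k : ℂ) * Complex.I ^ k * (esymm n k a : ℂ)) (n+1)]
  have e1 : (n+1+1)/2 = n/2+1 := by omega
  rw [e1]
  simp only [Xhat, Yhat]
  push_cast
  rw [Finset.sum_mul]
  congr 1
  · refine Finset.sum_congr rfl fun j _ => ?_
    rw [pow_mul, Complex.I_sq]
    ring
  · refine Finset.sum_congr rfl fun j _ => ?_
    rw [pow_succ, pow_mul, Complex.I_sq]
    ring
lemma rhs_eq (n : ℕ) (a : Fin n → ℝ) :
    ∑ p ∈ Finset.range n, Srow n a p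
      = ∑ i : Fin n, a i * ∏ k ∈ (Finset.univ : Finset (Fin n)).erase i, (1 + a k ^ 2) := by
  have h0 : ∑ p ∈ Finset.range n, Srow n a p
      = ∑ k ∈ Finset.range (n+1), ∑ s ∈ Finset.powersetCard k (Finset.univ : Finset (Fin n)),
          ∑ i ∈ s, (∏ j ∈ s.erase i, (a j) ^ 2) * a i := by
    rw [Finset.sum_range_succ']
    simp [Srow]
  rw [h0]
  have h1 : ∑ k ∈ Finset.range (n+1), ∑ s ∈ Finset.powersetCard k (Finset.univ : Finset (Fin n)),
      ∑ i ∈ s, (∏ j ∈ s.erase i, (a j) ^ 2) * a i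
      = ∑ s ∈ (Finset.univ : Finset (Fin n)).powerset,
          ∑ i ∈ s, (∏ j ∈ s.erase i, (a j) ^ 2) * a i := by
    rw [Finset.sum_powerset]
    simp
  rw [h1, swap_sum]
  refine Finset.sum_congr rfl fun i _ => ?_
  rw [_root_.prod_one_add, Finset.mul_sum]
  refine Finset.sum_congr rfl fun t ht => ?_
  have hit : i ∉ t := fun h =>
    Finset.notMem_erase i _ (Finset.mem_powerset.1 ht h)
  rw [Finset.erase_insert hit]
  ring

lemma conjP_eq (n : ℕ) (a : Fin n → ℝ) :
    ∏ k : Fin n, (1 - (a k : ℂ) * Complex.I)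
      = (Xpoly n a : ℂ) - (Ypoly n a : ℂ) * Complex.I := by
  have h := congrArg (starRingEnd ℂ) (P_eq n a)
  rw [map_prod, map_add, map_mul] at h
  simp only [map_one, map_mul, Complex.conj_I, Complex.conj_ofReal, map_add] at h
  have h2 : ∀ k : Fin n, (1 : ℂ) + (a k : ℂ) * -Complex.I = 1 - (a k : ℂ) * Complex.I :=
    fun k => by ring
  simp only [h2] at h
  rw [h]
  ring

lemma key_eq (n : ℕ) (a : Fin n → ℝ) :
    ((Xpoly n a : ℂ) - (Ypoly n a : ℂ) * Complex.I) *
        ((Xhat n a : ℂ) + (Yhat n a : ℂ) * Complex.I)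
      = ∑ i : Fin n, Complex.I * (a i : ℂ) * (1 - (a i : ℂ) * Complex.I) *
          ((∏ k ∈ (Finset.univ : Finset (Fin n)).erase i, (1 + a k ^ 2) : ℝ) : ℂ) := by
  rw [← conjP_eq, ← D_eq, mul_comm (∏ k : Fin n, (1 - (a k : ℂ) * Complex.I)),
    mul_assoc, Finset.sum_mul, Finset.mul_sum]
  refine Finset.sum_congr rfl fun i _ => ?_
  have hsplit : ∏ k : Fin n, (1 - (a k : ℂ) * Complex.I)
      = (1 - (a i : ℂ) * Complex.I) *
        ∏ k ∈ (Finset.univ : Finset (Fin n)).erase i, (1 - (a k : ℂ) * Complex.I) :=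
    (Finset.mul_prod_erase Finset.univ _ (Finset.mem_univ i)).symm
  have hprod : (∏ k ∈ (Finset.univ : Finset (Fin n)).erase i, (1 + (a k : ℂ) * Complex.I)) *
      ∏ k ∈ (Finset.univ : Finset (Fin n)).erase i, (1 - (a k : ℂ) * Complex.I)
      = ((∏ k ∈ (Finset.univ : Finset (Fin n)).erase i, (1 + a k ^ 2) : ℝ) : ℂ) := by
    rw [← Finset.prod_mul_distrib]
    push_cast
    refine Finset.prod_congr rfl fun k _ => ?_
    have : Complex.I ^ 2 = -1 := Complex.I_sq
    ring_nf
    rw [this]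
    ring
  rw [hsplit, ← hprod]
  ring

theorem XYhat_sub_YXhat_eq_sum_Srow (n : ℕ) (a : Fin n → ℝ) :
    Xpoly n a * Yhat n a - Ypoly n a * Xhat n a = ∑ p ∈ Finset.range n, Srow n a p := by
  have h := congrArg Complex.im (key_eq n a)
  rw [Complex.im_sum] at h
  have hL : (((Xpoly n a : ℂ) - (Ypoly n a : ℂ) * Complex.I) *
      ((Xhat n a : ℂ) + (Yhat n a : ℂ) * Complex.I)).im
      = Xpoly n a * Yhat n a - Ypoly n a * Xhat n a := by
    simp [Complex.mul_im, Complex.mul_re]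
    ring
  have hR : ∀ i : Fin n, (Complex.I * (a i : ℂ) * (1 - (a i : ℂ) * Complex.I) *
      ((∏ k ∈ (Finset.univ : Finset (Fin n)).erase i, (1 + a k ^ 2) : ℝ) : ℂ)).im
      = a i * ∏ k ∈ (Finset.univ : Finset (Fin n)).erase i, (1 + a k ^ 2) := by
    intro i
    set r : ℝ := ∏ k ∈ (Finset.univ : Finset (Fin n)).erase i, (1 + a k ^ 2) with hr
    simp [Complex.mul_im, Complex.mul_re]
  rw [hL, Finset.sum_congr rfl (fun i _ => hR i)] at h
  rw [h, rhs_eq]
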